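/- arXiv:1510.00617 — 3 statements merged into one kernel-verified Lean document; each statement's English description precedes it below -/
import Mathlib

section
/- Let h(z) = (az+b)/(cz+d) be a Möbius transformation with c ≠ 0 that has exactly two distinct fixed points p and q in ℂ. Then for every z ∈ ℂ with z ∉ {h·z, h⁻¹·z, p, q}, one has 1/(z − h·z) + 1/(z − h⁻¹·z) = 1/(z−p) + 1/(z−q). -/
/-- For a Möbius transformation `h(z) = (az+b)/(cz+d)` with `c ≠ 0` having two distinct
fixed points `p, q` (roots of `cz² + (d−a)z − b = 0`),
`1/(z − h·z) + 1/(z − h⁻¹·z) = 1/(z−p) + 1/(z−q)`. -/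
theorem stmt_1 (a b c d p q z : ℂ) (hdet : a * d - b * c ≠ 0) (hc : c ≠ 0)
    (hpq : p ≠ q)
    (hp : c * p ^ 2 + (d - a) * p - b = 0) (hq : c * q ^ 2 + (d - a) * q - b = 0)
    (hz1 : c * z + d ≠ 0) (hz2 : -c * z + a ≠ 0)
    (h1 : z ≠ (a * z + b) / (c * z + d)) (h2 : z ≠ (d * z - b) / (-c * z + a))
    (h3 : z ≠ p) (h4 : z ≠ q) :
    1 / (z - (a * z + b) / (c * z + d)) + 1 / (z - (d * z - b) / (-c * z + a)) =
      1 / (z - p) + 1 / (z - q) := by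
  have hne : p - q ≠ 0 := sub_ne_zero.mpr hpq
  have key : (p - q) * (c * (p + q) + (d - a)) = 0 := by linear_combination hp - hq
  have e1 : a = c * (p + q) + d := by
    rcases mul_eq_zero.mp key with h | h
    · exact absurd h hne
    · linear_combination -h
  have e2 : b = -(c * p * q) := by linear_combination -hp - p * e1
  have H3 : z - p ≠ 0 := sub_ne_zero.mpr h3
  have H4 : z - q ≠ 0 := sub_ne_zero.mpr h4
  subst e1 e2
  have r1 : z - ((c * (p + q) + d) * z + -(c * p * q)) / (c * z + d)
      = c * (z - p) * (z - q) / (c * z + d) := by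
    rw [eq_div_iff hz1, sub_mul, div_mul_cancel₀ _ hz1]
    ring
  have r2 : z - (d * z - -(c * p * q)) / (-c * z + (c * (p + q) + d))
      = -(c * (z - p) * (z - q)) / (-c * z + (c * (p + q) + d)) := by
    rw [eq_div_iff hz2, sub_mul, div_mul_cancel₀ _ hz2]
    ring
  have hprod : c * (z - p) * (z - q) ≠ 0 := mul_ne_zero (mul_ne_zero hc H3) H4
  rw [r1, r2, one_div_div, one_div_div, div_neg, ← sub_eq_add_neg,
    div_sub_div_same, div_add_div _ _ H3 H4,
    div_eq_div_iff hprod (mul_ne_zero H3 H4)]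
  ring
end

section
/- Let G be a finite subgroup of SO(3) acting on S², and let P ⊂ S² be the set of points with nontrivial stabilizer. There exists a finite subset 𝔭 ⊂ P such that P is the disjoint union of 𝔭 and its antipodal image −𝔭, and the set G∖{1} is the disjoint union over p ∈ 𝔭 of the sets stab(p)∖{1}. -/
/-- The unit sphere in `ℝ³`. -/
def onSphere (x : Fin 3 → ℝ) : Prop := x 0 ^ 2 + x 1 ^ 2 + x 2 ^ 2 = 1


open Matrix


lemma dot3 (x y : Fin 3 → ℝ) : x ⬝ᵥ y = x 0 * y 0 + x 1 * y 1 + x 2 * y 2 := by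
  simp [dotProduct, Fin.sum_univ_three]

section
lemma onSphere_iff {x : Fin 3 → ℝ} : onSphere x ↔ x ⬝ᵥ x = 1 := by
  unfold onSphere; rw [dot3]; constructor <;> intro h <;> linear_combination h

lemma onSphere_ne_zero {x : Fin 3 → ℝ} (h : onSphere x) : x ≠ 0 := by
  intro h0; rw [h0] at h; unfold onSphere at h; norm_num at h

lemma onSphere_neg {x : Fin 3 → ℝ} (h : onSphere x) : onSphere (-x) := by
  unfold onSphere at h ⊢; simp only [Pi.neg_apply]; linear_combination h

def lexpos (x : Fin 3 → ℝ) : Prop :=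
  0 < x 0 ∨ (x 0 = 0 ∧ 0 < x 1) ∨ (x 0 = 0 ∧ x 1 = 0 ∧ 0 < x 2)

lemma lexpos_or {x : Fin 3 → ℝ} (hx : x ≠ 0) : lexpos x ∨ lexpos (-x) := by
  rcases lt_trichotomy (x 0) 0 with h0 | h0 | h0
  · right; exact Or.inl (by simpa using h0)
  · rcases lt_trichotomy (x 1) 0 with h1 | h1 | h1
    · right; exact Or.inr (Or.inl ⟨by simpa using h0, by simpa using h1⟩)
    · rcases lt_trichotomy (x 2) 0 with h2 | h2 | h2
      · right; exact Or.inr (Or.inr ⟨by simpa using h0, by simpa using h1, by simpa using h2⟩)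
      · exfalso; apply hx; funext i; fin_cases i <;> simpa [h0, h1] using h2
      · left; exact Or.inr (Or.inr ⟨h0, h1, h2⟩)
    · left; exact Or.inr (Or.inl ⟨h0, h1⟩)
  · left; exact Or.inl h0

lemma lexpos_not_both {x : Fin 3 → ℝ} (h1 : lexpos x) (h2 : lexpos (-x)) : False := by
  unfold lexpos at h1 h2
  simp only [Pi.neg_apply, neg_eq_zero, neg_pos] at h2
  rcases h1 with h | ⟨h, h'⟩ | ⟨h, h', h''⟩ <;>
    rcases h2 with g | ⟨g, g'⟩ | ⟨g, g', g''⟩ <;> linarith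
end


section CoreLemmas


variable (A : Matrix.orthogonalGroup (Fin 3) ℝ)

lemma tA_mul : (A : Matrix (Fin 3) (Fin 3) ℝ)ᵀ * A = 1 := by
  have h := Matrix.mem_orthogonalGroup_iff' (n := Fin 3) (R := ℝ) |>.mp A.2
  simpa [Matrix.star_eq_conjTranspose, Matrix.conjTranspose, Matrix.transpose] using h

lemma A_mul_t : (A : Matrix (Fin 3) (Fin 3) ℝ) * (A : Matrix (Fin 3) (Fin 3) ℝ)ᵀ = 1 := by
  have h := Matrix.mem_orthogonalGroup_iff (n := Fin 3) (R := ℝ) |>.mp A.2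
  simpa [Matrix.star_eq_conjTranspose, Matrix.conjTranspose, Matrix.transpose] using h

lemma dot_pres (x y : Fin 3 → ℝ) :
    ((A : Matrix (Fin 3) (Fin 3) ℝ).mulVec x) ⬝ᵥ ((A : Matrix (Fin 3) (Fin 3) ℝ).mulVec y) = x ⬝ᵥ y := by
  rw [Matrix.dotProduct_mulVec, Matrix.vecMul_mulVec, tA_mul, Matrix.vecMul_one]



lemma exists_fixed (hd : (A : Matrix (Fin 3) (Fin 3) ℝ).det = 1) :
    ∃ x : Fin 3 → ℝ, x ≠ 0 ∧ (A : Matrix (Fin 3) (Fin 3) ℝ).mulVec x = x := by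
  set M : Matrix (Fin 3) (Fin 3) ℝ := (A : Matrix (Fin 3) (Fin 3) ℝ) with hM
  have hdet : (M - 1).det = 0 := by
    have h1 : M - 1 = M * (1 - Mᵀ) := by
      rw [Matrix.mul_sub, mul_one, A_mul_t]
    have h2 : (M - 1).det = (1 - M).det := by
      rw [h1, Matrix.det_mul, hd, one_mul, ← Matrix.det_transpose (1 - Mᵀ),
        Matrix.transpose_sub, Matrix.transpose_one, Matrix.transpose_transpose]
    have h3 : (1 : Matrix (Fin 3) (Fin 3) ℝ) - M = -(M - 1) := by rw [neg_sub]
    rw [h3, Matrix.det_neg] at h2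
    simp at h2
    linarith
  obtain ⟨v, hv0, hv⟩ := (Matrix.exists_mulVec_eq_zero_iff).mpr hdet
  refine ⟨v, hv0, ?_⟩
  rwa [Matrix.sub_mulVec, Matrix.one_mulVec, sub_eq_zero] at hv

lemma collinear_of_fixed (hd : (A : Matrix (Fin 3) (Fin 3) ℝ).det = 1)
    (hA : (A : Matrix (Fin 3) (Fin 3) ℝ) ≠ 1)
    (u v : Fin 3 → ℝ) (hu : (A : Matrix (Fin 3) (Fin 3) ℝ).mulVec u = u)
    (hv : (A : Matrix (Fin 3) (Fin 3) ℝ).mulVec v = v) (hu0 : u ≠ 0) :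
    ∃ c : ℝ, v = c • u := by
  by_contra hcol
  push_neg at hcol
  set B : Matrix (Fin 3) (Fin 3) ℝ := (A : Matrix (Fin 3) (Fin 3) ℝ) with hB
  set w : Fin 3 → ℝ := ![u 1 * v 2 - u 2 * v 1, u 2 * v 0 - u 0 * v 2, u 0 * v 1 - u 1 * v 0]
    with hw
  have hw0 : w 0 = u 1 * v 2 - u 2 * v 1 := by simp [hw]
  have hw1 : w 1 = u 2 * v 0 - u 0 * v 2 := by simp [hw]
  have hw2 : w 2 = u 0 * v 1 - u 1 * v 0 := by simp [hw]
  -- w ⬝ w ≠ 0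
  have hs : w ⬝ᵥ w ≠ 0 := by
    intro h0
    rw [dot3] at h0
    have e0 : w 0 = 0 := by nlinarith [sq_nonneg (w 0), sq_nonneg (w 1), sq_nonneg (w 2)]
    have e1 : w 1 = 0 := by nlinarith [sq_nonneg (w 0), sq_nonneg (w 1), sq_nonneg (w 2)]
    have e2 : w 2 = 0 := by nlinarith [sq_nonneg (w 0), sq_nonneg (w 1), sq_nonneg (w 2)]
    rw [hw0] at e0; rw [hw1] at e1; rw [hw2] at e2
    have hcr : ∀ i j : Fin 3, u i * v j = u j * v i := by
      intro i j; fin_cases i <;> fin_cases j <;> simp <;> linarith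
    obtain ⟨j, hj⟩ := Function.ne_iff.mp hu0
    simp only [Pi.zero_apply] at hj
    apply hcol (v j / u j)
    funext i
    simp only [Pi.smul_apply, smul_eq_mul]
    rw [div_mul_eq_mul_div, eq_div_iff hj]
    linear_combination (hcr j i)
  -- orthogonality of w to u, v
  have hwu : w ⬝ᵥ u = 0 := by rw [dot3, hw0, hw1, hw2]; ring
  have hwv : w ⬝ᵥ v = 0 := by rw [dot3, hw0, hw1, hw2]; ring
  set w' : Fin 3 → ℝ := B.mulVec w with hw'
  have h'u : w' ⬝ᵥ u = 0 := by
    rw [hw']; conv_lhs => rw [← hu]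
    rw [dot_pres]; exact hwu
  have h'v : w' ⬝ᵥ v = 0 := by
    rw [hw']; conv_lhs => rw [← hv]
    rw [dot_pres]; exact hwv
  have h'n : w' ⬝ᵥ w' = w ⬝ᵥ w := by rw [hw']; exact dot_pres A w w
  -- span property
  have key : ∀ x : Fin 3 → ℝ, x ⬝ᵥ u = 0 → x ⬝ᵥ v = 0 → (w ⬝ᵥ w) • x = (x ⬝ᵥ w) • w := by
    intro x hx1 hx2
    rw [dot3] at hx1 hx2
    have k0 : (w ⬝ᵥ w) * x 0 = (x ⬝ᵥ w) * w 0 := by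
      rw [dot3, dot3, hw0, hw1, hw2]
      linear_combination (((u 2*v 0-u 0*v 2)*u 2-(u 0*v 1-u 1*v 0)*u 1)) * hx2 - (((u 2*v 0-u 0*v 2)*v 2-(u 0*v 1-u 1*v 0)*v 1)) * hx1
    have k1 : (w ⬝ᵥ w) * x 1 = (x ⬝ᵥ w) * w 1 := by
      rw [dot3, dot3, hw0, hw1, hw2]
      linear_combination (((u 0*v 1-u 1*v 0)*u 0-(u 1*v 2-u 2*v 1)*u 2)) * hx2 - (((u 0*v 1-u 1*v 0)*v 0-(u 1*v 2-u 2*v 1)*v 2)) * hx1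
    have k2 : (w ⬝ᵥ w) * x 2 = (x ⬝ᵥ w) * w 2 := by
      rw [dot3, dot3, hw0, hw1, hw2]
      linear_combination (((u 1*v 2-u 2*v 1)*u 1-(u 2*v 0-u 0*v 2)*u 0)) * hx2 - (((u 1*v 2-u 2*v 1)*v 1-(u 2*v 0-u 0*v 2)*v 0)) * hx1
    funext i
    simp only [Pi.smul_apply, smul_eq_mul]
    fin_cases i
    · exact k0
    · exact k1
    · exact k2

  have heq : (w ⬝ᵥ w) • w' = (w' ⬝ᵥ w) • w := key w' h'u h'v
  have hcomm : w ⬝ᵥ w' = w' ⬝ᵥ w := dotProduct_comm w w'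
  have hsq : (w' ⬝ᵥ w) ^ 2 = (w ⬝ᵥ w) ^ 2 := by
    have h2 := congrArg (fun z => z ⬝ᵥ ((w ⬝ᵥ w) • w')) heq
    simp only [smul_dotProduct, dotProduct_smul, smul_eq_mul] at h2
    rw [h'n, hcomm] at h2
    have h3 : ((w' ⬝ᵥ w) ^ 2 - (w ⬝ᵥ w) ^ 2) * (w ⬝ᵥ w) = 0 := by linear_combination -h2
    have h4 := mul_eq_zero.mp h3
    rcases h4 with h4 | h4
    · linarith
    · exact absurd h4 hs
  have hpm : w' = w ∨ w' = -w := by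
    have h5 : (w' ⬝ᵥ w - w ⬝ᵥ w) * (w' ⬝ᵥ w + w ⬝ᵥ w) = 0 := by linear_combination hsq
    rcases mul_eq_zero.mp h5 with h5 | h5
    · left
      have ht : w' ⬝ᵥ w = w ⬝ᵥ w := by linarith
      rw [ht] at heq
      exact smul_right_injective (Fin 3 → ℝ) hs heq
    · right
      have ht : w' ⬝ᵥ w = -(w ⬝ᵥ w) := by linarith
      rw [ht, neg_smul, ← smul_neg] at heq
      exact smul_right_injective (Fin 3 → ℝ) hs heq
  set M : Matrix (Fin 3) (Fin 3) ℝ := Matrix.of (fun i j => ![u, v, w] j i) with hM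
  have hdetM : M.det = w ⬝ᵥ w := by
    rw [Matrix.det_fin_three, dot3, hw0, hw1, hw2]
    simp [hM, hw]
    ring
  rcases hpm with hww | hww
  · -- w' = w : A fixes a basis, so A = 1
    have hBw : B *ᵥ w = w := by rw [← hw']; exact hww
    have hfix : B * M = M := by
      funext i j
      rw [Matrix.mul_apply, Fin.sum_univ_three]
      fin_cases j
      · simpa [hM, Matrix.mulVec, dotProduct, Fin.sum_univ_three] using congrFun hu i
      · simpa [hM, Matrix.mulVec, dotProduct, Fin.sum_univ_three] using congrFun hv i
      · simpa [hM, Matrix.mulVec, dotProduct, Fin.sum_univ_three] using congrFun hBw i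
    have hMdet0 : IsUnit M.det := by rw [hdetM]; exact isUnit_iff_ne_zero.mpr hs
    apply hA
    calc B = B * (M * M⁻¹) := by rw [Matrix.mul_nonsing_inv M hMdet0, mul_one]
      _ = (B * M) * M⁻¹ := by rw [mul_assoc]
      _ = M * M⁻¹ := by rw [hfix]
      _ = 1 := Matrix.mul_nonsing_inv M hMdet0
  · -- w' = -w : determinant contradiction
    have hBw : B *ᵥ w = -w := by rw [← hw']; exact hww
    set N : Matrix (Fin 3) (Fin 3) ℝ := Matrix.of (fun i j => ![u, v, -w] j i) with hN
    have hdetN : N.det = -(w ⬝ᵥ w) := by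
      rw [Matrix.det_fin_three, dot3, hw0, hw1, hw2]
      simp [hN, hw]
      ring
    have hfix : B * M = N := by
      funext i j
      rw [Matrix.mul_apply, Fin.sum_univ_three]
      fin_cases j
      · simpa [hM, hN, Matrix.mulVec, dotProduct, Fin.sum_univ_three] using congrFun hu i
      · simpa [hM, hN, Matrix.mulVec, dotProduct, Fin.sum_univ_three] using congrFun hv i
      · simpa [hM, hN, Matrix.mulVec, dotProduct, Fin.sum_univ_three] using congrFun hBw i
    have hdd := congrArg Matrix.det hfix
    rw [Matrix.det_mul, hd, one_mul, hdetM, hdetN] at hdd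
    apply hs
    linarith
end CoreLemmas


section
variable {G : Subgroup (Matrix.orthogonalGroup (Fin 3) ℝ)}

lemma coe_ne_one {g : Matrix.orthogonalGroup (Fin 3) ℝ} (hg : g ≠ 1) :
    (g : Matrix (Fin 3) (Fin 3) ℝ) ≠ 1 := by
  intro h
  exact hg (Subtype.coe_injective (by simpa using h))

lemma pm_of_fixed (A : Matrix.orthogonalGroup (Fin 3) ℝ)
    (hd : (A : Matrix (Fin 3) (Fin 3) ℝ).det = 1)
    (hA : (A : Matrix (Fin 3) (Fin 3) ℝ) ≠ 1)
    {x y : Fin 3 → ℝ} (hx : onSphere x) (hy : onSphere y)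
    (hfx : (A : Matrix (Fin 3) (Fin 3) ℝ).mulVec x = x)
    (hfy : (A : Matrix (Fin 3) (Fin 3) ℝ).mulVec y = y) : y = x ∨ y = -x := by
  obtain ⟨c, hc⟩ := collinear_of_fixed A hd hA x y hfx hfy (onSphere_ne_zero hx)
  have h1 : y ⬝ᵥ y = 1 := onSphere_iff.mp hy
  have h2 : x ⬝ᵥ x = 1 := onSphere_iff.mp hx
  rw [hc, smul_dotProduct, dotProduct_smul, h2, smul_eq_mul, smul_eq_mul] at h1
  have hc2 : (c - 1) * (c + 1) = 0 := by linear_combination h1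
  rcases mul_eq_zero.mp hc2 with h | h
  · left; rw [hc, show c = 1 by linarith, one_smul]
  · right; rw [hc, show c = -1 by linarith, neg_smul, one_smul]

/-- For a finite group `G ⊆ SO(3)` acting on the sphere, with `P` the set of sphere points
with nontrivial stabilizer, there is a finite set `𝔭` with `P = 𝔭 ⊔ (−𝔭)` (disjointly),
and `G∖{1}` is the disjoint union over `p ∈ 𝔭` of `stab(p)∖{1}` (i.e. every nontrivial
`g ∈ G` fixes exactly one point of `𝔭`). -/
theorem stmt_6 (G : Subgroup (Matrix.orthogonalGroup (Fin 3) ℝ)) [Finite G]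
    (hdet : ∀ g ∈ G, ((g : Matrix (Fin 3) (Fin 3) ℝ)).det = 1) :
    ∃ 𝔭 : Set (Fin 3 → ℝ), 𝔭.Finite ∧
      ({x : Fin 3 → ℝ | onSphere x ∧
          ∃ g ∈ G, g ≠ 1 ∧ (g : Matrix (Fin 3) (Fin 3) ℝ).mulVec x = x}
        = 𝔭 ∪ (fun p => -p) '' 𝔭) ∧
      Disjoint 𝔭 ((fun p => -p) '' 𝔭) ∧
      (∀ g : Matrix.orthogonalGroup (Fin 3) ℝ, g ∈ G → g ≠ 1 →
        ∃! p, p ∈ 𝔭 ∧ (g : Matrix (Fin 3) (Fin 3) ℝ).mulVec p = p) := by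
  set P : Set (Fin 3 → ℝ) := {x : Fin 3 → ℝ | onSphere x ∧
      ∃ g ∈ G, g ≠ 1 ∧ (g : Matrix (Fin 3) (Fin 3) ℝ).mulVec x = x} with hP
  -- finiteness of P
  have fixfin : ∀ g : Matrix.orthogonalGroup (Fin 3) ℝ, g ∈ G → g ≠ 1 →
      Set.Finite {x : Fin 3 → ℝ | onSphere x ∧ (g : Matrix (Fin 3) (Fin 3) ℝ).mulVec x = x} := by
    intro g hg hg1
    set S := {x : Fin 3 → ℝ | onSphere x ∧ (g : Matrix (Fin 3) (Fin 3) ℝ).mulVec x = x} with hS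
    by_cases hne : S.Nonempty
    · obtain ⟨x₀, hx₀⟩ := hne
      apply Set.Finite.subset ((Set.finite_singleton x₀).insert (-x₀) |>.insert x₀)
      intro y hy
      rcases pm_of_fixed g (hdet g hg) (coe_ne_one hg1) hx₀.1 hy.1 hx₀.2 hy.2 with h | h
      · simp [h]
      · simp [h]
    · rw [Set.not_nonempty_iff_eq_empty] at hne
      rw [hne]; exact Set.finite_empty
  have hPfin : P.Finite := by
    have hGfin : ((G : Set (Matrix.orthogonalGroup (Fin 3) ℝ)) \ {1}).Finite :=
      (Set.toFinite _).diff
    apply Set.Finite.subset (hGfin.biUnion (fun g hg =>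
      fixfin g hg.1 (by simpa using hg.2)))
    rintro x ⟨hs, g, hg, hg1, hfix⟩
    exact Set.mem_biUnion ⟨hg, by simpa using hg1⟩ ⟨hs, hfix⟩
  -- negation stability of P
  have hPneg : ∀ x ∈ P, -x ∈ P := by
    rintro x ⟨hs, g, hg, hg1, hfix⟩
    exact ⟨onSphere_neg hs, g, hg, hg1, by rw [Matrix.mulVec_neg, hfix]⟩
  refine ⟨{x ∈ P | lexpos x}, hPfin.subset (Set.sep_subset _ _), ?_, ?_, ?_⟩
  · -- P = 𝔭 ∪ -𝔭
    ext x
    constructor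
    · intro hx
      have hx0 : x ≠ 0 := onSphere_ne_zero hx.1
      rcases lexpos_or hx0 with h | h
      · exact Or.inl ⟨hx, h⟩
      · exact Or.inr ⟨-x, ⟨hPneg x hx, h⟩, neg_neg x⟩
    · rintro (hx | ⟨p, hp, rfl⟩)
      · exact hx.1
      · exact hPneg p hp.1
  · -- disjoint
    rw [Set.disjoint_left]
    rintro x ⟨hxP, hxpos⟩ ⟨p, ⟨hpP, hppos⟩, rfl⟩
    exact lexpos_not_both hppos (by simpa using hxpos)
  · -- exists unique
    intro g hg hg1
    have hd := hdet g hg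
    have hA := coe_ne_one hg1
    obtain ⟨x, hx0, hxfix⟩ := exists_fixed g hd
    -- normalize
    have hdx : 0 < x ⬝ᵥ x := by
      have h1 : x ⬝ᵥ x ≠ 0 := fun h => hx0 (dotProduct_self_eq_zero.mp h)
      have h2 : 0 ≤ x ⬝ᵥ x := by rw [dot3]; nlinarith [sq_nonneg (x 0), sq_nonneg (x 1), sq_nonneg (x 2)]
      exact lt_of_le_of_ne h2 (Ne.symm h1)
    set r : ℝ := Real.sqrt (x ⬝ᵥ x) with hr
    have hrpos : 0 < r := Real.sqrt_pos.mpr hdx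
    set p₀ : Fin 3 → ℝ := r⁻¹ • x with hp₀
    have hp₀s : onSphere p₀ := by
      rw [onSphere_iff, hp₀, smul_dotProduct, dotProduct_smul, smul_eq_mul,
        smul_eq_mul]
      have h3 : r * r = x ⬝ᵥ x := Real.mul_self_sqrt hdx.le
      rw [dot3] at h3
      field_simp
      linarith [h3, dot3 x x]
    have hp₀f : (g : Matrix (Fin 3) (Fin 3) ℝ).mulVec p₀ = p₀ := by
      rw [hp₀, Matrix.mulVec_smul, hxfix]
    have hp₀0 : p₀ ≠ 0 := onSphere_ne_zero hp₀s
    -- pick the lexpos one among p₀, -p₀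
    obtain ⟨p, hps, hpf, hppos⟩ :
        ∃ p : Fin 3 → ℝ, onSphere p ∧ (g : Matrix (Fin 3) (Fin 3) ℝ).mulVec p = p ∧ lexpos p := by
      rcases lexpos_or hp₀0 with h | h
      · exact ⟨p₀, hp₀s, hp₀f, h⟩
      · exact ⟨-p₀, onSphere_neg hp₀s, by rw [Matrix.mulVec_neg, hp₀f], h⟩
    refine ⟨p, ⟨⟨⟨hps, g, hg, hg1, hpf⟩, hppos⟩, hpf⟩, ?_⟩
    rintro q ⟨⟨⟨hqs, _⟩, hqpos⟩, hqf⟩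
    rcases pm_of_fixed g hd hA hps hqs hpf hqf with h | h
    · exact h
    · exfalso
      exact lexpos_not_both hppos (by rw [← h]; exact hqpos)
end
end

section
/- Let Γ be a group, K a field of characteristic zero, I the augmentation ideal of the group algebra K[Γ]. Then the map Γ → I/I², x ↦ (x−1) + I², induces an isomorphism of K-vector spaces Γ^{ab} ⊗_ℤ K ≅ I/I². -/
open TensorProduct

namespace Stmt11Aux

variable (K : Type*) [Field K] (Γ : Type*) [Group Γ]

noncomputable def ε : MonoidAlgebra K Γ →ₐ[K] K := (MonoidAlgebra.lift K K Γ) 1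

noncomputable abbrev I : Submodule K (MonoidAlgebra K Γ) := LinearMap.ker (ε K Γ).toLinearMap

noncomputable abbrev Isq : Submodule K (I K Γ) :=
  Submodule.comap (I K Γ).subtype (I K Γ * I K Γ)

noncomputable abbrev Q := (I K Γ) ⧸ (Isq K Γ)

abbrev M := Additive (Abelianization Γ)

lemma eps_of (x : Γ) : ε K Γ (MonoidAlgebra.of K Γ x) = 1 := by
  simp [ε, MonoidAlgebra.lift_of]

lemma eps_single (x : Γ) (k : K) : ε K Γ (MonoidAlgebra.single x k) = k := by
  simp [ε, MonoidAlgebra.lift_single]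

lemma mem_I (x : Γ) : MonoidAlgebra.of K Γ x - 1 ∈ I K Γ := by
  simp [LinearMap.mem_ker, eps_single, eps_of]


/-- The class of `x - 1` in `I/I²`. -/
noncomputable def cls (x : Γ) : Q K Γ :=
  Submodule.Quotient.mk ⟨MonoidAlgebra.of K Γ x - 1, mem_I K Γ x⟩

/-- `x ↦ (x-1) + I²` as a monoid hom into the (multiplicativized) quotient. -/
noncomputable def g : Γ →* Multiplicative (Q K Γ) where
  toFun x := Multiplicative.ofAdd (cls K Γ x)
  map_one' := by
    simp only [cls]
    have : (⟨MonoidAlgebra.of K Γ 1 - 1, mem_I K Γ 1⟩ : I K Γ) = 0 :=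
      Subtype.ext (by show MonoidAlgebra.of K Γ 1 - 1 = _; rw [map_one, sub_self]; rfl)
    rw [this]
    simp
  map_mul' x y := by
    simp only [cls, ← ofAdd_add]
    congr 1
    rw [← Submodule.Quotient.mk_add, Submodule.Quotient.eq]
    refine Submodule.mem_comap.mpr ?_
    have key : ((⟨MonoidAlgebra.of K Γ (x*y) - 1, mem_I K Γ (x*y)⟩ : I K Γ) -
        (⟨MonoidAlgebra.of K Γ x - 1, mem_I K Γ x⟩ + ⟨MonoidAlgebra.of K Γ y - 1, mem_I K Γ y⟩) : I K Γ).val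
        = (MonoidAlgebra.of K Γ x - 1) * (MonoidAlgebra.of K Γ y - 1) := by
      push_cast
      rw [map_mul]
      noncomm_ring
    rw [Submodule.subtype_apply, key]
    exact Submodule.mul_mem_mul (mem_I K Γ x) (mem_I K Γ y)

noncomputable def g' : M Γ →ₗ[ℤ] Q K Γ :=
  (MonoidHom.toAdditiveLeft (Abelianization.lift (g K Γ))).toIntLinearMap

lemma g'_apply (x : Γ) : g' K Γ (Additive.ofMul (Abelianization.of x)) = cls K Γ x := rfl

/-- The forward map `K ⊗ Γᵃᵇ → I/I²`. -/
noncomputable def fwd : K ⊗[ℤ] M Γ →ₗ[K] Q K Γ :=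
  TensorProduct.AlgebraTensorModule.lift
    (LinearMap.toSpanSingleton K (M Γ →ₗ[ℤ] Q K Γ) (g' K Γ))

lemma fwd_tmul (k : K) (m : M Γ) : fwd K Γ (k ⊗ₜ m) = k • g' K Γ m := rfl


/-- `K[Γ] → K ⊗ Γᵃᵇ`, `γ ↦ 1 ⊗ [γ]` extended linearly. -/
noncomputable def f : MonoidAlgebra K Γ →ₗ[K] K ⊗[ℤ] M Γ :=
  Finsupp.linearCombination K
    (fun γ : Γ => ((1:K) ⊗ₜ[ℤ] (Additive.ofMul (Abelianization.of γ)) : K ⊗[ℤ] M Γ)) ∘ₗ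
    (MonoidAlgebra.coeffLinearEquiv K).toLinearMap

lemma f_single (γ : Γ) (k : K) :
    f K Γ (MonoidAlgebra.single γ k)
      = k ⊗ₜ[ℤ] (Additive.ofMul (Abelianization.of γ)) := by
  erw [f, LinearMap.comp_apply, Finsupp.linearCombination_single]
  rw [smul_tmul', smul_eq_mul, mul_one]

lemma f_of (γ : Γ) :
    f K Γ (MonoidAlgebra.of K Γ γ)
      = (1:K) ⊗ₜ[ℤ] (Additive.ofMul (Abelianization.of γ)) :=
  f_single K Γ γ 1

lemma f_mul (a b : MonoidAlgebra K Γ) :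
    f K Γ (a * b) = ε K Γ b • f K Γ a + ε K Γ a • f K Γ b := by
  induction a using MonoidAlgebra.induction_on with
  | of x =>
    induction b using MonoidAlgebra.induction_on with
    | of y =>
      rw [← map_mul, f_of, f_of, f_of, eps_of, eps_of, one_smul, one_smul]
      have : Additive.ofMul (Abelianization.of (x * y))
          = Additive.ofMul (Abelianization.of x) + Additive.ofMul (Abelianization.of y) := by
        rw [map_mul]; rfl
      rw [this, tmul_add]
    | add b₁ b₂ h1 h2 =>
      rw [mul_add, map_add, h1, h2, map_add, map_add, add_smul, smul_add]
      abel
    | smul r b hb =>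
      rw [mul_smul_comm, map_smul, hb, map_smul, map_smul, smul_eq_mul]
      module
  | add a₁ a₂ h1 h2 =>
    rw [add_mul, map_add, h1, h2, map_add, map_add, add_smul, smul_add]
    abel
  | smul r a ha =>
    rw [smul_mul_assoc, map_smul, ha, map_smul, map_smul, smul_eq_mul]
    module

lemma Isq_le_ker : Isq K Γ ≤ LinearMap.ker ((f K Γ).comp (I K Γ).subtype) := by
  intro x hx
  have hx' : (x : MonoidAlgebra K Γ) ∈ I K Γ * I K Γ := hx
  have hII : I K Γ * I K Γ ≤ LinearMap.ker (f K Γ) := by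
    rw [Submodule.mul_le]
    intro m hm n hn
    rw [LinearMap.mem_ker, f_mul]
    rw [LinearMap.mem_ker] at hm hn
    rw [show ε K Γ m = 0 from hm, show ε K Γ n = 0 from hn, zero_smul, zero_smul, add_zero]
  simpa [LinearMap.mem_ker] using hII hx'

/-- The backward map `I/I² → K ⊗ Γᵃᵇ`. -/
noncomputable def bwd : Q K Γ →ₗ[K] K ⊗[ℤ] M Γ :=
  Submodule.liftQ (Isq K Γ) ((f K Γ).comp (I K Γ).subtype) (Isq_le_ker K Γ)

lemma bwd_mk (x : I K Γ) :
    bwd K Γ (Submodule.Quotient.mk x) = f K Γ (x : MonoidAlgebra K Γ) := rfl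

noncomputable def hmap : MonoidAlgebra K Γ →ₗ[K] MonoidAlgebra K Γ :=
  LinearMap.id - (Algebra.linearMap K (MonoidAlgebra K Γ)).comp (ε K Γ).toLinearMap

lemma h_mem (a : MonoidAlgebra K Γ) : hmap K Γ a ∈ I K Γ := by
  simp [hmap, LinearMap.mem_ker, eps_single]

/-- `a ↦ (a - ε(a)·1) + I²`. -/
noncomputable def θ : MonoidAlgebra K Γ →ₗ[K] Q K Γ :=
  (Isq K Γ).mkQ.comp (LinearMap.codRestrict (I K Γ) (hmap K Γ) (h_mem K Γ))

lemma θ_apply (a : MonoidAlgebra K Γ) :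
    θ K Γ a = Submodule.Quotient.mk ⟨hmap K Γ a, h_mem K Γ a⟩ := rfl

lemma fwd_comp_f : (fwd K Γ).comp (f K Γ) = θ K Γ := by
  refine MonoidAlgebra.lhom_ext' fun γ => LinearMap.ext fun k => ?_
  rw [LinearMap.comp_apply, LinearMap.comp_apply, LinearMap.comp_apply,
    MonoidAlgebra.lsingle_apply]
  rw [f_single, show (k : K) ⊗ₜ[ℤ] (Additive.ofMul (Abelianization.of γ))
      = k • ((1:K) ⊗ₜ[ℤ] (Additive.ofMul (Abelianization.of γ)) : K ⊗[ℤ] M Γ) by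
    rw [smul_tmul', smul_eq_mul, mul_one], map_smul, fwd_tmul, g'_apply, one_smul]
  rw [θ_apply, cls, ← Submodule.Quotient.mk_smul]
  congr 1
  apply Subtype.ext
  show k • (MonoidAlgebra.of K Γ γ - 1) = hmap K Γ (MonoidAlgebra.single γ k)
  rw [hmap]
  show k • (MonoidAlgebra.of K Γ γ - 1)
      = MonoidAlgebra.single γ k - algebraMap K (MonoidAlgebra K Γ) (ε K Γ (MonoidAlgebra.single γ k))
  rw [eps_single, smul_sub, Algebra.algebraMap_eq_smul_one]
  congr 1
  rw [MonoidAlgebra.of_apply, MonoidAlgebra.smul_single', mul_one]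

lemma fwd_f (a : MonoidAlgebra K Γ) (ha : a ∈ I K Γ) :
    fwd K Γ (f K Γ a) = Submodule.Quotient.mk ⟨a, ha⟩ := by
  have := LinearMap.congr_fun (fwd_comp_f K Γ) a
  rw [LinearMap.comp_apply] at this
  rw [this, θ_apply]
  congr 1
  apply Subtype.ext
  show a - algebraMap K (MonoidAlgebra K Γ) (ε K Γ a) = a
  rw [show ε K Γ a = 0 from ha, map_zero, sub_zero]


lemma comp1 : (fwd K Γ).comp (bwd K Γ) = LinearMap.id := by
  refine LinearMap.ext fun q => ?_
  obtain ⟨x, rfl⟩ := Submodule.Quotient.mk_surjective _ q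
  rw [LinearMap.comp_apply, bwd_mk, fwd_f K Γ x.1 x.2, LinearMap.id_apply]

lemma comp2 : (bwd K Γ).comp (fwd K Γ) = LinearMap.id := by
  refine LinearMap.ext fun z => ?_
  rw [LinearMap.id_apply]
  induction z using TensorProduct.induction_on with
  | zero => simp
  | add a b ha hb => rw [LinearMap.comp_apply] at ha hb ⊢; rw [map_add, map_add, ha, hb]
  | tmul k m =>
    obtain ⟨γ, rfl⟩ : ∃ γ : Γ, Additive.ofMul (Abelianization.of γ) = m := by
      obtain ⟨γ, hγ⟩ := Quotient.exists_rep (Additive.toMul m)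
      exact ⟨γ, by rw [show Abelianization.of γ = ⟦γ⟧ from rfl, hγ]; rfl⟩
    rw [LinearMap.comp_apply, fwd_tmul, g'_apply, map_smul, cls, bwd_mk, map_sub, f_of,
      show (1 : MonoidAlgebra K Γ) = MonoidAlgebra.single 1 1 from MonoidAlgebra.one_def,
      f_single]
    have : Additive.ofMul (Abelianization.of (1 : Γ)) = (0 : M Γ) := by
      rw [map_one]; rfl
    rw [this, tmul_zero, sub_zero, smul_tmul', smul_eq_mul, mul_one]

/-- The isomorphism `K ⊗ Γᵃᵇ ≃ I/I²`. -/
noncomputable def φ : (K ⊗[ℤ] M Γ) ≃ₗ[K] Q K Γ :=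
  LinearEquiv.ofLinear (fwd K Γ) (bwd K Γ) (comp1 K Γ) (comp2 K Γ)

end Stmt11Aux

open Stmt11Aux in
/-- For a group `Γ` and a field `K` of characteristic zero, with `I` the augmentation
ideal of `K[Γ]`, the map `x ↦ (x−1) + I²` induces an isomorphism of `K`-vector spaces
`K ⊗_ℤ Γ^{ab} ≅ I/I²`. -/
theorem stmt_11 (K : Type*) [Field K] [CharZero K] (Γ : Type*) [Group Γ] :
    (∀ x : Γ, MonoidAlgebra.of K Γ x - 1 ∈
        LinearMap.ker ((MonoidAlgebra.lift K K Γ) 1).toLinearMap) ∧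
    ∃ φ : (K ⊗[ℤ] Additive (Abelianization Γ)) ≃ₗ[K]
        (↥(LinearMap.ker ((MonoidAlgebra.lift K K Γ) 1).toLinearMap) ⧸
          Submodule.comap
            (LinearMap.ker ((MonoidAlgebra.lift K K Γ) 1).toLinearMap).subtype
            (LinearMap.ker ((MonoidAlgebra.lift K K Γ) 1).toLinearMap *
              LinearMap.ker ((MonoidAlgebra.lift K K Γ) 1).toLinearMap)),
      ∀ (x : Γ) (hx : MonoidAlgebra.of K Γ x - 1 ∈
          LinearMap.ker ((MonoidAlgebra.lift K K Γ) 1).toLinearMap),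
        φ ((1 : K) ⊗ₜ[ℤ] Additive.ofMul (Abelianization.of x)) =
          Submodule.Quotient.mk ⟨MonoidAlgebra.of K Γ x - 1, hx⟩ := by
  refine ⟨mem_I K Γ, Stmt11Aux.φ K Γ, fun x hx => ?_⟩
  show fwd K Γ ((1:K) ⊗ₜ[ℤ] Additive.ofMul (Abelianization.of x)) = _
  rw [fwd_tmul, g'_apply, one_smul, cls]
  rfl
end
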